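/- Let F be a real normed vector space, γ ∈ (0,1], L ≥ 0, and let T : ℝ^n ∖ {0} → F be positively 0-homogeneous (T(t x) = T(x) for all t > 0, x ≠ 0) and satisfy ‖T(u) − T(v)‖ ≤ L ‖u − v‖^γ for all u, v on the unit sphere. Then for all ξ ≠ 0 and all ζ with ξ + ζ ≠ 0 one has ‖T(ξ) − T(ξ + ζ)‖ ≤ 4 L (‖ζ‖ / ‖ξ‖)^γ. -/

import Mathlib

/-- A positively `0`-homogeneous map which is `γ`-Hölder on the unit sphere satisfies
`‖T(ξ) − T(ξ+ζ)‖ ≤ 4 L (‖ζ‖/‖ξ‖)^γ` for every `ξ ≠ 0` and `ζ` with `ξ + ζ ≠ 0`. -/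
theorem holder_estimate_zero_homogeneous
    (n : ℕ) (F : Type*) [NormedAddCommGroup F]
    (γ L : ℝ) (hγ : 0 < γ) (hγ1 : γ ≤ 1) (hL : 0 ≤ L)
    (T : EuclideanSpace ℝ (Fin n) → F)
    (hhom : ∀ t : ℝ, 0 < t → ∀ x : EuclideanSpace ℝ (Fin n), x ≠ 0 →
      T (t • x) = T x)
    (hHolder : ∀ u v : EuclideanSpace ℝ (Fin n), ‖u‖ = 1 → ‖v‖ = 1 →
      ‖T u - T v‖ ≤ L * ‖u - v‖ ^ γ) :
    ∀ ξ ζ : EuclideanSpace ℝ (Fin n), ξ ≠ 0 → ξ + ζ ≠ 0 →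
      ‖T ξ - T (ξ + ζ)‖ ≤ 4 * L * (‖ζ‖ / ‖ξ‖) ^ γ := by
  intro ξ ζ hξ hξζ
  set a := ‖ξ‖ with ha
  set b := ‖ξ + ζ‖ with hb
  have ha0 : 0 < a := norm_pos_iff.mpr hξ
  have hb0 : 0 < b := norm_pos_iff.mpr hξζ
  set u : EuclideanSpace ℝ (Fin n) := a⁻¹ • ξ
  set v : EuclideanSpace ℝ (Fin n) := b⁻¹ • (ξ + ζ)
  have hu1 : ‖u‖ = 1 := by
    rw [norm_smul, Real.norm_eq_abs, abs_of_pos (inv_pos.mpr ha0), ← ha,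
      inv_mul_cancel₀ ha0.ne']
  have hv1 : ‖v‖ = 1 := by
    rw [norm_smul, Real.norm_eq_abs, abs_of_pos (inv_pos.mpr hb0), ← hb,
      inv_mul_cancel₀ hb0.ne']
  have hTu : T u = T ξ := hhom _ (inv_pos.mpr ha0) _ hξ
  have hTv : T v = T (ξ + ζ) := hhom _ (inv_pos.mpr hb0) _ hξζ
  -- key estimate ‖u - v‖ ≤ 2 ‖ζ‖ / a
  have hba : |a⁻¹ - b⁻¹| * b ≤ ‖ζ‖ / a := by
    have heq : |a⁻¹ - b⁻¹| * b = |b - a| / a := by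
      rw [show a⁻¹ - b⁻¹ = (b - a) / (a * b) by field_simp,
        abs_div, abs_of_pos (mul_pos ha0 hb0)]
      field_simp
    rw [heq]
    have hnum : |b - a| ≤ ‖ζ‖ := by
      calc |b - a| = |‖ξ + ζ‖ - ‖ξ‖| := rfl
        _ ≤ ‖(ξ + ζ) - ξ‖ := abs_norm_sub_norm_le _ _
        _ = ‖ζ‖ := by rw [add_sub_cancel_left]
    gcongr
  have hkey : ‖u - v‖ ≤ 2 * (‖ζ‖ / a) := by
    have hdecomp : u - v = a⁻¹ • (ξ - (ξ + ζ)) + (a⁻¹ - b⁻¹) • (ξ + ζ) := by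
      simp only [u, v, smul_sub, sub_smul]; abel
    calc ‖u - v‖ = ‖a⁻¹ • (ξ - (ξ + ζ)) + (a⁻¹ - b⁻¹) • (ξ + ζ)‖ := by rw [hdecomp]
      _ ≤ ‖a⁻¹ • (ξ - (ξ + ζ))‖ + ‖(a⁻¹ - b⁻¹) • (ξ + ζ)‖ := norm_add_le _ _
      _ = a⁻¹ * ‖ξ - (ξ + ζ)‖ + |a⁻¹ - b⁻¹| * b := by
          rw [norm_smul, norm_smul, Real.norm_eq_abs, Real.norm_eq_abs,
            abs_of_pos (inv_pos.mpr ha0)]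
      _ = ‖ζ‖ / a + |a⁻¹ - b⁻¹| * b := by
          rw [show ξ - (ξ + ζ) = -ζ by abel, norm_neg]
          ring
      _ ≤ ‖ζ‖ / a + ‖ζ‖ / a := by linarith [hba]
      _ = 2 * (‖ζ‖ / a) := by ring
  have hq : (0:ℝ) ≤ ‖ζ‖ / a := div_nonneg (norm_nonneg _) ha0.le
  calc ‖T ξ - T (ξ + ζ)‖ = ‖T u - T v‖ := by rw [hTu, hTv]
    _ ≤ L * ‖u - v‖ ^ γ := hHolder u v hu1 hv1
    _ ≤ L * (2 * (‖ζ‖ / a)) ^ γ := by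
        exact mul_le_mul_of_nonneg_left
          (Real.rpow_le_rpow (norm_nonneg _) hkey hγ.le) hL
    _ = L * (2 ^ γ * (‖ζ‖ / a) ^ γ) := by
        rw [Real.mul_rpow (by norm_num) hq]
    _ ≤ L * (2 * (‖ζ‖ / a) ^ γ) := by
        have h2 : (2:ℝ) ^ γ ≤ 2 := by
          calc (2:ℝ) ^ γ ≤ 2 ^ (1:ℝ) :=
              Real.rpow_le_rpow_of_exponent_le (by norm_num) hγ1
            _ = 2 := Real.rpow_one 2
        have := Real.rpow_nonneg hq γ
        exact mul_le_mul_of_nonneg_left (mul_le_mul_of_nonneg_right h2 this) hL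
    _ ≤ 4 * L * (‖ζ‖ / a) ^ γ := by
        have := Real.rpow_nonneg hq γ
        nlinarith
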